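/- arXiv:2309.16271 — 2 statements merged into one kernel-verified Lean document; each statement's English description precedes it below -/
import Mathlib

section
/- For x in (0,1), the function g(x) = x^{1−c} ₂F₁(a−c+1, b−c+1; 2−c; x) satisfies the hypergeometric differential equation x(1−x)g''(x) + (c − (a+b+1)x)g'(x) − ab g(x) = 0. -/
open Complex

/-- The Gauss hypergeometric series `₂F₁(a,b;c;x)`. -/
noncomputable def hyp (a b c x : ℂ) : ℂ :=
  ∑' n : ℕ, ((ascPochhammer ℂ n).eval a * (ascPochhammer ℂ n).eval b /
    ((ascPochhammer ℂ n).eval c * (n.factorial : ℂ))) * x ^ n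

namespace HypODE

open Filter

noncomputable def q (A B C : ℂ) (n : ℕ) : ℂ :=
  (ascPochhammer ℂ n).eval A * (ascPochhammer ℂ n).eval B /
    ((ascPochhammer ℂ n).eval C * (n.factorial : ℂ))

variable (A B C : ℂ)

lemma hyp_eq (z : ℂ) : hyp A B C z = ∑' n, q A B C n * z ^ n := rfl

lemma pochC_ne (hC : ∀ n : ℕ, C + (n : ℂ) ≠ 0) (n : ℕ) :
    (ascPochhammer ℂ n).eval C ≠ 0 := by
  induction n with
  | zero => simp
  | succ n ih =>
      rw [ascPochhammer_succ_eval]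
      exact mul_ne_zero ih (hC n)

lemma q_rec' (hC : ∀ n : ℕ, C + (n : ℂ) ≠ 0) (n : ℕ) :
    q A B C (n + 1) * (((n : ℂ) + 1) * ((n : ℂ) + C)) =
      q A B C n * (((n : ℂ) + A) * ((n : ℂ) + B)) := by
  have h1 : (ascPochhammer ℂ n).eval C ≠ 0 := pochC_ne C hC n
  have h1' : (ascPochhammer ℂ (n + 1)).eval C ≠ 0 := pochC_ne C hC (n + 1)
  have h3 : ((n.factorial : ℂ)) ≠ 0 := Nat.cast_ne_zero.mpr n.factorial_ne_zero
  have h3' : (((n + 1).factorial : ℂ)) ≠ 0 := Nat.cast_ne_zero.mpr (n + 1).factorial_ne_zero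
  have hd1 : (ascPochhammer ℂ (n + 1)).eval C * (((n + 1).factorial : ℂ)) ≠ 0 := mul_ne_zero h1' h3'
  have hd2 : (ascPochhammer ℂ n).eval C * ((n.factorial : ℂ)) ≠ 0 := mul_ne_zero h1 h3
  rw [q, q, div_mul_eq_mul_div, div_mul_eq_mul_div, div_eq_div_iff hd1 hd2]
  rw [ascPochhammer_succ_eval, ascPochhammer_succ_eval, ascPochhammer_succ_eval,
    Nat.factorial_succ]
  push_cast
  ring

lemma q_rec (hC : ∀ n : ℕ, C + (n : ℂ) ≠ 0) (n : ℕ) :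
    q A B C (n + 1) =
      q A B C n * (((n : ℂ) + A) * ((n : ℂ) + B) / (((n : ℂ) + C) * ((n : ℂ) + 1))) := by
  have h2 : ((n : ℂ) + C) ≠ 0 := by
    have := hC n; intro h; apply this; linear_combination h
  have h4 : ((n : ℂ) + 1) ≠ 0 := by
    have h5 : (((n + 1 : ℕ)) : ℂ) ≠ 0 := Nat.cast_ne_zero.mpr (Nat.succ_ne_zero n)
    push_cast at h5; exact h5
  rw [mul_div_assoc', eq_div_iff (mul_ne_zero h2 h4)]
  linear_combination q_rec' A B C hC n

lemma norm_q_succ (hC : ∀ n : ℕ, C + (n : ℂ) ≠ 0) (n : ℕ) :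
    ‖q A B C (n + 1)‖ =
      ‖q A B C n‖ * (‖((n : ℂ) + A) * ((n : ℂ) + B)‖ / ‖((n : ℂ) + C) * ((n : ℂ) + 1)‖) := by
  rw [q_rec A B C hC n, norm_mul, norm_div]

lemma tendsto_ratio (D E : ℂ) :
    Tendsto (fun n : ℕ => ((n : ℂ) + D) / ((n : ℂ) + E)) atTop (nhds 1) := by
  have hnorm : Tendsto (fun n : ℕ => ‖(n : ℂ) + E‖) atTop atTop := by
    apply tendsto_atTop_mono (f := fun n : ℕ => (n : ℝ) - ‖E‖)
    · intro n
      have h := norm_sub_le ((n : ℂ) + E) E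
      rw [add_sub_cancel_right] at h
      rw [Complex.norm_natCast] at h
      linarith
    · exact tendsto_atTop_add_const_right _ _ tendsto_natCast_atTop_atTop
  have hinv : Tendsto (fun n : ℕ => (D - E) / ((n : ℂ) + E)) atTop (nhds 0) := by
    rw [tendsto_zero_iff_norm_tendsto_zero]
    have h0 : Tendsto (fun n : ℕ => ‖D - E‖ * ‖(n : ℂ) + E‖⁻¹) atTop (nhds 0) := by
      have := hnorm.inv_tendsto_atTop
      simpa using this.const_mul ‖D - E‖
    refine h0.congr fun n => ?_
    rw [norm_div, div_eq_mul_inv]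
  have key : Tendsto (fun n : ℕ => 1 + (D - E) / ((n : ℂ) + E)) atTop (nhds 1) := by
    simpa using tendsto_const_nhds.add hinv
  refine key.congr' ?_
  have hev : ∀ᶠ n : ℕ in atTop, ‖E‖ < (n : ℝ) := tendsto_natCast_atTop_atTop.eventually_gt_atTop ‖E‖
  filter_upwards [hev] with n hn
  have hne : (n : ℂ) + E ≠ 0 := by
    intro h
    have hE : E = -(n : ℂ) := by linear_combination h
    rw [hE, norm_neg, Complex.norm_natCast] at hn
    linarith
  field_simp
  ring

lemma tendsto_rho (hC : ∀ n : ℕ, C + (n : ℂ) ≠ 0) :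
    Tendsto (fun n : ℕ => ‖((n : ℂ) + A) * ((n : ℂ) + B)‖ / ‖((n : ℂ) + C) * ((n : ℂ) + 1)‖)
      atTop (nhds 1) := by
  have h := ((tendsto_ratio A C).mul (tendsto_ratio B 1)).norm
  simp only [mul_one, norm_one] at h
  refine h.congr fun n => ?_
  rw [div_mul_div_comm, norm_div]

lemma summable_master (hC : ∀ n : ℕ, C + (n : ℂ) ≠ 0) {r : ℝ} (h0 : 0 < r) (h1 : r < 1) :
    Summable (fun n : ℕ => ‖q A B C n‖ * ((n : ℝ) + 2) ^ 2 * r ^ n) := by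
  set a : ℕ → ℝ := fun n => ‖q A B C n‖ * ((n : ℝ) + 2) ^ 2 * r ^ n with ha
  set ρ : ℕ → ℝ := fun n => ‖((n : ℂ) + A) * ((n : ℂ) + B)‖ / ‖((n : ℂ) + C) * ((n : ℂ) + 1)‖
    with hρ
  have hρ0 : ∀ n, 0 ≤ ρ n := by intro n; rw [hρ]; positivity
  have hq : ∀ n, ‖q A B C (n + 1)‖ = ‖q A B C n‖ * ρ n := by
    intro n; rw [hρ]; exact norm_q_succ A B C hC n
  have hrec : ∀ n, a (n + 1) = a n * (ρ n * (((n : ℝ) + 3) ^ 2 / ((n : ℝ) + 2) ^ 2) * r) := by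
    intro n
    have hne : ((n : ℝ) + 2) ^ 2 ≠ 0 := by positivity
    simp only [ha]
    rw [hq n]
    push_cast
    rw [pow_succ]
    generalize ‖q A B C n‖ = Q
    generalize ρ n = P
    field_simp
    ring
  have htend : Tendsto (fun n => ρ n * (((n : ℝ) + 3) ^ 2 / ((n : ℝ) + 2) ^ 2) * r)
      atTop (nhds r) := by
    have h1' : Tendsto (fun n : ℕ => ((n : ℝ) + 3) / ((n : ℝ) + 2)) atTop (nhds 1) := by
      have h2 : Tendsto (fun n : ℕ => (n : ℝ) + 2) atTop atTop :=
        tendsto_atTop_add_const_right _ _ tendsto_natCast_atTop_atTop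
      have h0' : Tendsto (fun n : ℕ => ((n : ℝ) + 2)⁻¹) atTop (nhds 0) := h2.inv_tendsto_atTop
      have key : Tendsto (fun n : ℕ => 1 + ((n : ℝ) + 2)⁻¹) atTop (nhds 1) := by
        simpa using tendsto_const_nhds.add h0'
      refine key.congr fun n => ?_
      have hne2 : ((n : ℝ) + 2) ≠ 0 := by positivity
      field_simp
      ring
    have h2' : Tendsto (fun n : ℕ => ((n : ℝ) + 3) ^ 2 / ((n : ℝ) + 2) ^ 2) atTop (nhds 1) := by
      have := (h1'.pow 2)
      simp only [one_pow] at this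
      refine this.congr fun n => ?_
      rw [div_pow]
    rw [hρ]
    have h3' := ((tendsto_rho A B C hC).mul h2').mul_const r
    rw [one_mul, one_mul] at h3'
    exact h3'
  have hlt : r < (1 + r) / 2 := by linarith
  have hlt1 : (1 + r) / 2 < 1 := by linarith
  apply summable_of_ratio_norm_eventually_le hlt1
  filter_upwards [htend.eventually_le_const hlt] with n hn
  have ha0 : 0 ≤ a n := by rw [ha]; positivity
  have ht0 : 0 ≤ ρ n * (((n : ℝ) + 3) ^ 2 / ((n : ℝ) + 2) ^ 2) * r := by
    have := hρ0 n; positivity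
  rw [Real.norm_of_nonneg (by rw [hrec n]; positivity), Real.norm_of_nonneg ha0, hrec n]
  calc a n * (ρ n * (((n : ℝ) + 3) ^ 2 / ((n : ℝ) + 2) ^ 2) * r)
      ≤ a n * ((1 + r) / 2) := by
        apply mul_le_mul_of_nonneg_left hn ha0
    _ = (1 + r) / 2 * a n := by ring


lemma bnd1 {R y : ℝ} (hR : 0 < R) (h0 : 0 ≤ y) (hy : y ≤ R) (n : ℕ) :
    (n : ℝ) * y ^ (n - 1) ≤ ((n : ℝ) + 2) ^ 2 * R ^ n / R := by
  have hR' : R ≠ 0 := ne_of_gt hR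
  rcases n with _ | m
  · simp
    positivity
  · have hpow : y ^ m ≤ R ^ m := pow_le_pow_left₀ h0 hy m
    have hRm : (0 : ℝ) ≤ R ^ m := by positivity
    have hm : (0 : ℝ) ≤ (m : ℝ) := Nat.cast_nonneg m
    simp only [Nat.add_sub_cancel]
    push_cast
    have hred : ((m : ℝ) + 1 + 2) ^ 2 * R ^ (m + 1) / R = ((m : ℝ) + 1 + 2) ^ 2 * R ^ m := by
      rw [div_eq_iff hR', pow_succ]; ring
    rw [hred]
    calc ((m : ℝ) + 1) * y ^ m ≤ ((m : ℝ) + 1) * R ^ m :=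
          mul_le_mul_of_nonneg_left hpow (by positivity)
      _ ≤ ((m : ℝ) + 1 + 2) ^ 2 * R ^ m := by
          apply mul_le_mul_of_nonneg_right _ hRm
          nlinarith

lemma bnd2 {R y : ℝ} (hR : 0 < R) (h0 : 0 ≤ y) (hy : y ≤ R) (n : ℕ) :
    (n : ℝ) * (((n - 1 : ℕ) : ℝ) * y ^ (n - 2)) ≤ ((n : ℝ) + 2) ^ 2 * R ^ n / (R * R) := by
  have hR' : R * R ≠ 0 := by positivity
  rcases n with _ | _ | m
  · simp
    positivity
  · simp
    positivity
  · have hpow : y ^ m ≤ R ^ m := pow_le_pow_left₀ h0 hy m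
    have hRm : (0 : ℝ) ≤ R ^ m := by positivity
    have hm : (0 : ℝ) ≤ (m : ℝ) := Nat.cast_nonneg m
    simp only [show m + 2 - 1 = m + 1 from rfl, show m + 2 - 2 = m from rfl]
    push_cast
    have hred : ((m : ℝ) + 1 + 1 + 2) ^ 2 * R ^ (m + 1 + 1) / (R * R)
        = ((m : ℝ) + 1 + 1 + 2) ^ 2 * R ^ m := by
      rw [div_eq_iff hR', pow_succ, pow_succ]; ring
    rw [hred]
    calc ((m : ℝ) + 1 + 1) * (((m : ℝ) + 1) * y ^ m)
        = (((m : ℝ) + 1 + 1) * ((m : ℝ) + 1)) * y ^ m := by ring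
      _ ≤ (((m : ℝ) + 1 + 1) * ((m : ℝ) + 1)) * R ^ m :=
          mul_le_mul_of_nonneg_left hpow (by positivity)
      _ ≤ ((m : ℝ) + 1 + 1 + 2) ^ 2 * R ^ m := by
          apply mul_le_mul_of_nonneg_right _ hRm
          nlinarith

lemma bndu {R y : ℝ} (C : ℂ) (hR : 0 < R) (h0 : 0 ≤ y) (hy : y ≤ R) (n : ℕ) :
    (n : ℝ) * (‖(n : ℂ) - 1 + C‖ * y ^ (n - 1)) ≤
      (1 + ‖C‖) * (((n : ℝ) + 2) ^ 2 * R ^ n) / R := by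
  have hR' : R ≠ 0 := ne_of_gt hR
  have hCn : (0 : ℝ) ≤ ‖C‖ := norm_nonneg C
  rcases n with _ | m
  · simp
    positivity
  · have hpow : y ^ m ≤ R ^ m := pow_le_pow_left₀ h0 hy m
    have hRm : (0 : ℝ) ≤ R ^ m := by positivity
    have hm : (0 : ℝ) ≤ (m : ℝ) := Nat.cast_nonneg m
    have hyb : (0 : ℝ) ≤ y ^ m := by positivity
    simp only [Nat.add_sub_cancel]
    push_cast
    have hred : (1 + ‖C‖) * (((m : ℝ) + 1 + 2) ^ 2 * R ^ (m + 1)) / R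
        = (1 + ‖C‖) * ((m : ℝ) + 1 + 2) ^ 2 * R ^ m := by
      rw [div_eq_iff hR', pow_succ]; ring
    rw [hred]
    have hC' : ‖(m : ℂ) + 1 - 1 + C‖ ≤ (m : ℝ) + ‖C‖ := by
      have h1 : (m : ℂ) + 1 - 1 + C = (m : ℂ) + C := by ring
      rw [h1]
      calc ‖(m : ℂ) + C‖ ≤ ‖(m : ℂ)‖ + ‖C‖ := norm_add_le _ _
        _ = (m : ℝ) + ‖C‖ := by rw [Complex.norm_natCast]
    calc ((m : ℝ) + 1) * (‖(m : ℂ) + 1 - 1 + C‖ * y ^ m)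
        ≤ ((m : ℝ) + 1) * (((m : ℝ) + ‖C‖) * R ^ m) := by
          apply mul_le_mul_of_nonneg_left _ (by positivity)
          exact mul_le_mul hC' hpow hyb (by positivity)
      _ = (((m : ℝ) + 1) * ((m : ℝ) + ‖C‖)) * R ^ m := by ring
      _ ≤ ((1 + ‖C‖) * ((m : ℝ) + 1 + 2) ^ 2) * R ^ m := by
          apply mul_le_mul_of_nonneg_right _ hRm
          nlinarith [mul_nonneg hm hCn, mul_nonneg (mul_nonneg hm hm) hCn]
      _ = (1 + ‖C‖) * ((m : ℝ) + 1 + 2) ^ 2 * R ^ m := by ring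

lemma summable_f0 (hC : ∀ n : ℕ, C + (n : ℂ) ≠ 0) {z : ℂ} (hz : ‖z‖ < 1) :
    Summable (fun n : ℕ => q A B C n * z ^ n) := by
  set R : ℝ := (‖z‖ + 1) / 2 with hRdef
  have h00 := norm_nonneg z
  have hR0 : 0 < R := by rw [hRdef]; linarith
  have hR1 : R < 1 := by rw [hRdef]; linarith
  have hzR : ‖z‖ ≤ R := by rw [hRdef]; linarith
  apply Summable.of_norm_bounded (summable_master A B C hC hR0 hR1)
  intro n
  rw [norm_mul, norm_pow]
  have h1le : (1 : ℝ) ≤ ((n : ℝ) + 2) ^ 2 := by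
    have : (0 : ℝ) ≤ (n : ℝ) := Nat.cast_nonneg n
    nlinarith
  calc ‖q A B C n‖ * ‖z‖ ^ n ≤ ‖q A B C n‖ * R ^ n := by
        exact mul_le_mul_of_nonneg_left (pow_le_pow_left₀ (norm_nonneg z) hzR n) (norm_nonneg _)
    _ = ‖q A B C n‖ * 1 * R ^ n := by ring
    _ ≤ ‖q A B C n‖ * ((n : ℝ) + 2) ^ 2 * R ^ n := by
        apply mul_le_mul_of_nonneg_right _ (by positivity)
        exact mul_le_mul_of_nonneg_left h1le (norm_nonneg _)

lemma summable_f1 (hC : ∀ n : ℕ, C + (n : ℂ) ≠ 0) {z : ℂ} (hz : ‖z‖ < 1) :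
    Summable (fun n : ℕ => q A B C n * ((n : ℂ) * z ^ (n - 1))) := by
  set R : ℝ := (‖z‖ + 1) / 2 with hRdef
  have h00 := norm_nonneg z
  have hR0 : 0 < R := by rw [hRdef]; linarith
  have hR1 : R < 1 := by rw [hRdef]; linarith
  have hzR : ‖z‖ ≤ R := by rw [hRdef]; linarith
  apply Summable.of_norm_bounded ((summable_master A B C hC hR0 hR1).div_const R)
  intro n
  rw [norm_mul, norm_mul, norm_pow, Complex.norm_natCast]
  have hb := bnd1 hR0 (norm_nonneg z) hzR n
  calc ‖q A B C n‖ * ((n : ℝ) * ‖z‖ ^ (n - 1))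
      ≤ ‖q A B C n‖ * (((n : ℝ) + 2) ^ 2 * R ^ n / R) :=
        mul_le_mul_of_nonneg_left hb (norm_nonneg _)
    _ = ‖q A B C n‖ * ((n : ℝ) + 2) ^ 2 * R ^ n / R := by ring

lemma summable_f2 (hC : ∀ n : ℕ, C + (n : ℂ) ≠ 0) {z : ℂ} (hz : ‖z‖ < 1) :
    Summable (fun n : ℕ => q A B C n * ((n : ℂ) * (((n - 1 : ℕ) : ℂ) * z ^ (n - 2)))) := by
  set R : ℝ := (‖z‖ + 1) / 2 with hRdef
  have h00 := norm_nonneg z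
  have hR0 : 0 < R := by rw [hRdef]; linarith
  have hR1 : R < 1 := by rw [hRdef]; linarith
  have hzR : ‖z‖ ≤ R := by rw [hRdef]; linarith
  apply Summable.of_norm_bounded ((summable_master A B C hC hR0 hR1).div_const (R * R))
  intro n
  rw [norm_mul, norm_mul, norm_mul, norm_pow, Complex.norm_natCast, Complex.norm_natCast]
  have hb := bnd2 hR0 (norm_nonneg z) hzR n
  calc ‖q A B C n‖ * ((n : ℝ) * (((n - 1 : ℕ) : ℝ) * ‖z‖ ^ (n - 2)))
      ≤ ‖q A B C n‖ * (((n : ℝ) + 2) ^ 2 * R ^ n / (R * R)) :=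
        mul_le_mul_of_nonneg_left hb (norm_nonneg _)
    _ = ‖q A B C n‖ * ((n : ℝ) + 2) ^ 2 * R ^ n / (R * R) := by ring

lemma summable_u (hC : ∀ n : ℕ, C + (n : ℂ) ≠ 0) {z : ℂ} (hz : ‖z‖ < 1) :
    Summable (fun n : ℕ => q A B C n * ((n : ℂ) * (((n : ℂ) - 1 + C) * z ^ (n - 1)))) := by
  set R : ℝ := (‖z‖ + 1) / 2 with hRdef
  have h00 := norm_nonneg z
  have hR0 : 0 < R := by rw [hRdef]; linarith
  have hR1 : R < 1 := by rw [hRdef]; linarith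
  have hzR : ‖z‖ ≤ R := by rw [hRdef]; linarith
  have hsum := ((summable_master A B C hC hR0 hR1).mul_left (1 + ‖C‖)).div_const R
  apply Summable.of_norm_bounded hsum
  intro n
  rw [norm_mul, norm_mul, norm_mul, norm_pow, Complex.norm_natCast]
  have hb := bndu (y := ‖z‖) C hR0 (norm_nonneg z) hzR n
  calc ‖q A B C n‖ * ((n : ℝ) * (‖(n : ℂ) - 1 + C‖ * ‖z‖ ^ (n - 1)))
      ≤ ‖q A B C n‖ * ((1 + ‖C‖) * (((n : ℝ) + 2) ^ 2 * R ^ n) / R) :=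
        mul_le_mul_of_nonneg_left hb (norm_nonneg _)
    _ = (1 + ‖C‖) * (‖q A B C n‖ * ((n : ℝ) + 2) ^ 2 * R ^ n) / R := by ring

lemma hasDerivAt_H (hC : ∀ n : ℕ, C + (n : ℂ) ≠ 0) {z : ℂ} (hz : ‖z‖ < 1) :
    HasDerivAt (fun w : ℂ => ∑' n : ℕ, q A B C n * w ^ n)
      (∑' n : ℕ, q A B C n * ((n : ℂ) * z ^ (n - 1))) z := by
  set R : ℝ := (‖z‖ + 1) / 2 with hRdef
  have h00 := norm_nonneg z
  have hR0 : 0 < R := by rw [hRdef]; linarith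
  have hR1 : R < 1 := by rw [hRdef]; linarith
  have hzR : ‖z‖ < R := by rw [hRdef]; linarith
  have hmem : z ∈ Metric.ball (0 : ℂ) R := mem_ball_zero_iff.mpr hzR
  refine hasDerivAt_tsum_of_isPreconnected
    (u := fun n => ‖q A B C n‖ * ((n : ℝ) + 2) ^ 2 * R ^ n / R)
    (g' := fun n y => q A B C n * ((n : ℂ) * y ^ (n - 1)))
    ((summable_master A B C hC hR0 hR1).div_const R) Metric.isOpen_ball
    ((convex_ball (0 : ℂ) R).isPreconnected)
    (fun n y _ => (hasDerivAt_pow n y).const_mul (q A B C n))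
    (fun n y hy => ?_) hmem (summable_f0 A B C hC hz) hmem
  rw [norm_mul, norm_mul, norm_pow, Complex.norm_natCast]
  have hb := bnd1 (y := ‖y‖) hR0 (norm_nonneg y) (le_of_lt (mem_ball_zero_iff.mp hy)) n
  calc ‖q A B C n‖ * ((n : ℝ) * ‖y‖ ^ (n - 1))
      ≤ ‖q A B C n‖ * (((n : ℝ) + 2) ^ 2 * R ^ n / R) :=
        mul_le_mul_of_nonneg_left hb (norm_nonneg _)
    _ = ‖q A B C n‖ * ((n : ℝ) + 2) ^ 2 * R ^ n / R := by ring

lemma hasDerivAt_H1 (hC : ∀ n : ℕ, C + (n : ℂ) ≠ 0) {z : ℂ} (hz : ‖z‖ < 1) :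
    HasDerivAt (fun w : ℂ => ∑' n : ℕ, q A B C n * ((n : ℂ) * w ^ (n - 1)))
      (∑' n : ℕ, q A B C n * ((n : ℂ) * (((n - 1 : ℕ) : ℂ) * z ^ (n - 2)))) z := by
  set R : ℝ := (‖z‖ + 1) / 2 with hRdef
  have h00 := norm_nonneg z
  have hR0 : 0 < R := by rw [hRdef]; linarith
  have hR1 : R < 1 := by rw [hRdef]; linarith
  have hzR : ‖z‖ < R := by rw [hRdef]; linarith
  have hmem : z ∈ Metric.ball (0 : ℂ) R := mem_ball_zero_iff.mpr hzR
  refine hasDerivAt_tsum_of_isPreconnected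
    (u := fun n => ‖q A B C n‖ * ((n : ℝ) + 2) ^ 2 * R ^ n / (R * R))
    (g' := fun n y => q A B C n * ((n : ℂ) * (((n - 1 : ℕ) : ℂ) * y ^ (n - 2))))
    ((summable_master A B C hC hR0 hR1).div_const (R * R)) Metric.isOpen_ball
    ((convex_ball (0 : ℂ) R).isPreconnected)
    (fun n y _ => ?_) (fun n y hy => ?_) hmem (summable_f1 A B C hC hz) hmem
  · have h := ((hasDerivAt_pow (n - 1) y).const_mul ((n : ℂ))).const_mul (q A B C n)
    have he : n - 1 - 1 = n - 2 := by omega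
    rw [he] at h
    exact h
  · rw [norm_mul, norm_mul, norm_mul, norm_pow, Complex.norm_natCast, Complex.norm_natCast]
    have hb := bnd2 (y := ‖y‖) hR0 (norm_nonneg y) (le_of_lt (mem_ball_zero_iff.mp hy)) n
    calc ‖q A B C n‖ * ((n : ℝ) * (((n - 1 : ℕ) : ℝ) * ‖y‖ ^ (n - 2)))
        ≤ ‖q A B C n‖ * (((n : ℝ) + 2) ^ 2 * R ^ n / (R * R)) :=
          mul_le_mul_of_nonneg_left hb (norm_nonneg _)
      _ = ‖q A B C n‖ * ((n : ℝ) + 2) ^ 2 * R ^ n / (R * R) := by ring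

lemma ode (hC : ∀ n : ℕ, C + (n : ℂ) ≠ 0) {z : ℂ} (hz : ‖z‖ < 1) :
    z * (1 - z) * (∑' n : ℕ, q A B C n * ((n : ℂ) * (((n - 1 : ℕ) : ℂ) * z ^ (n - 2))))
      + (C - (A + B + 1) * z) * (∑' n : ℕ, q A B C n * ((n : ℂ) * z ^ (n - 1)))
      - A * B * (∑' n : ℕ, q A B C n * z ^ n) = 0 := by
  have S0 := summable_f0 A B C hC hz
  have S1 := summable_f1 A B C hC hz
  have S2 := summable_f2 A B C hC hz
  have Su := summable_u A B C hC hz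
  set u : ℕ → ℂ := fun n => q A B C n * ((n : ℂ) * (((n : ℂ) - 1 + C) * z ^ (n - 1))) with hu
  have Sv : Summable (fun n => u (n + 1)) := (summable_nat_add_iff 1).mpr Su
  have key : ∀ n : ℕ,
      z * (1 - z) * (q A B C n * ((n : ℂ) * (((n - 1 : ℕ) : ℂ) * z ^ (n - 2))))
        + (C - (A + B + 1) * z) * (q A B C n * ((n : ℂ) * z ^ (n - 1)))
        - A * B * (q A B C n * z ^ n) = u n - u (n + 1) := by
    intro n
    have hv : u (n + 1) = q A B C n * (((n : ℂ) + A) * (((n : ℂ) + B) * z ^ n)) := by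
      rw [hu]
      simp only [Nat.add_sub_cancel]
      push_cast
      linear_combination z ^ n * q_rec' A B C hC n
    rw [hv, hu]
    rcases n with _ | _ | m
    · push_cast
      ring
    · push_cast
      ring
    · simp only [show m + 2 - 1 = m + 1 from rfl, show m + 2 - 2 = m from rfl]
      push_cast
      ring
  rw [← tsum_mul_left, ← tsum_mul_left, ← tsum_mul_left,
    ← Summable.tsum_add (S2.mul_left (z * (1 - z))) (S1.mul_left (C - (A + B + 1) * z)),
    ← Summable.tsum_sub ((S2.mul_left (z * (1 - z))).add (S1.mul_left (C - (A + B + 1) * z)))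
      (S0.mul_left (A * B)), tsum_congr key, Summable.tsum_sub Su Sv, Summable.tsum_eq_zero_add Su]
  have hu0 : u 0 = 0 := by rw [hu]; simp
  rw [hu0, zero_add, sub_self]

lemma hasDerivAt_cpow_real (s : ℂ) (hs : s ≠ 0) {t : ℝ} (ht : t ≠ 0) :
    HasDerivAt (fun y : ℝ => (y : ℂ) ^ s) (s * (t : ℂ) ^ (s - 1)) t := by
  have hr : s - 1 ≠ -1 := by intro h; apply hs; linear_combination h
  have h := (hasDerivAt_ofReal_cpow_const' ht hr).const_mul s
  have heq : (fun y : ℝ => s * ((y : ℂ) ^ (s - 1 + 1) / (s - 1 + 1)))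
      = fun y : ℝ => (y : ℂ) ^ s := by
    funext y
    rw [show s - 1 + 1 = s from by ring, mul_comm, div_mul_cancel₀ _ hs]
  rw [heq] at h
  exact h

end HypODE

/--  solves the hypergeometric ODE on . -/
theorem second_solution_at_zero_solves_ODE (a b c : ℂ) (hc : ∀ k : ℤ, c ≠ (k : ℂ))
    (x : ℝ) (hx : x ∈ Set.Ioo (0 : ℝ) 1) :
    (x : ℂ) * (1 - (x : ℂ)) *
        deriv (deriv (fun t : ℝ => (t : ℂ) ^ (1 - c) * hyp (a - c + 1) (b - c + 1) (2 - c) t)) x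
      + (c - (a + b + 1) * (x : ℂ)) *
        deriv (fun t : ℝ => (t : ℂ) ^ (1 - c) * hyp (a - c + 1) (b - c + 1) (2 - c) t) x
      - a * b * ((x : ℂ) ^ (1 - c) * hyp (a - c + 1) (b - c + 1) (2 - c) x) = 0 := by
  obtain ⟨hx0, hx1⟩ := hx
  have hC : ∀ n : ℕ, (2 - c) + (n : ℂ) ≠ 0 := by
    intro n h
    exact hc (n + 2) (by push_cast; linear_combination -h)
  have hc1 : (1 : ℂ) - c ≠ 0 := by
    intro h; exact hc 1 (by push_cast; linear_combination -h)
  have hcc : (1 : ℂ) - c - 1 ≠ 0 := by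
    intro h; exact hc 0 (by push_cast; linear_combination -h)
  have hx0' : (x : ℂ) ≠ 0 := Complex.ofReal_ne_zero.mpr (ne_of_gt hx0)
  have hnorm : ∀ t : ℝ, t ∈ Set.Ioo (0 : ℝ) 1 → ‖(t : ℂ)‖ < 1 := by
    intro t ht
    rw [Complex.norm_real, Real.norm_eq_abs, abs_of_pos ht.1]
    exact ht.2
  simp only [HypODE.hyp_eq]
  -- first derivative on Ioo
  have hg : ∀ t ∈ Set.Ioo (0 : ℝ) 1,
      HasDerivAt (fun t : ℝ => (t : ℂ) ^ (1 - c) *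
          ∑' n : ℕ, HypODE.q (a - c + 1) (b - c + 1) (2 - c) n * (t : ℂ) ^ n)
        ((1 - c) * (t : ℂ) ^ (1 - c - 1) *
            (∑' n : ℕ, HypODE.q (a - c + 1) (b - c + 1) (2 - c) n * (t : ℂ) ^ n)
          + (t : ℂ) ^ (1 - c) *
            ∑' n : ℕ, HypODE.q (a - c + 1) (b - c + 1) (2 - c) n *
              ((n : ℂ) * (t : ℂ) ^ (n - 1))) t := by
    intro t ht
    have h1 := HypODE.hasDerivAt_cpow_real (1 - c) hc1 (ne_of_gt ht.1)
    have h2 := (HypODE.hasDerivAt_H (a - c + 1) (b - c + 1) (2 - c) hC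
      (hnorm t ht)).comp_ofReal
    exact h1.mul h2
  -- second derivative at x
  have hF := (HypODE.hasDerivAt_H (a - c + 1) (b - c + 1) (2 - c) hC
    (hnorm x ⟨hx0, hx1⟩)).comp_ofReal
  have hF1 := (HypODE.hasDerivAt_H1 (a - c + 1) (b - c + 1) (2 - c) hC
    (hnorm x ⟨hx0, hx1⟩)).comp_ofReal
  have h3 := ((HypODE.hasDerivAt_cpow_real (1 - c - 1) hcc
    (ne_of_gt hx0)).const_mul (1 - c)).mul hF
  have h4 := (HypODE.hasDerivAt_cpow_real (1 - c) hc1 (ne_of_gt hx0)).mul hF1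
  have hG1 := h3.add h4
  -- rewrite the iterated derivatives
  have hev : deriv (fun t : ℝ => (t : ℂ) ^ (1 - c) *
      ∑' n : ℕ, HypODE.q (a - c + 1) (b - c + 1) (2 - c) n * (t : ℂ) ^ n)
      =ᶠ[nhds x] (fun t : ℝ => (1 - c) * (t : ℂ) ^ (1 - c - 1) *
            (∑' n : ℕ, HypODE.q (a - c + 1) (b - c + 1) (2 - c) n * (t : ℂ) ^ n)
          + (t : ℂ) ^ (1 - c) *
            ∑' n : ℕ, HypODE.q (a - c + 1) (b - c + 1) (2 - c) n *
              ((n : ℂ) * (t : ℂ) ^ (n - 1))) :=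
    Filter.eventuallyEq_of_mem (Ioo_mem_nhds hx0 hx1) (fun t ht => (hg t ht).deriv)
  simp only [Pi.mul_def, Pi.add_def] at hG1
  rw [hev.deriv_eq, hG1.deriv, (hg x ⟨hx0, hx1⟩).deriv]
  -- the hypergeometric ODE for the shifted parameters
  have hODE := HypODE.ode (a - c + 1) (b - c + 1) (2 - c) hC (hnorm x ⟨hx0, hx1⟩)
  -- power identities
  have e1 : (x : ℂ) ^ (1 - c - 1 - 1 + 1) = (x : ℂ) ^ (1 - c - 1 - 1) * (x : ℂ) := by
    rw [Complex.cpow_add _ _ hx0', Complex.cpow_one]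
  have e2 : (x : ℂ) ^ (1 - c - 1 - 1 + 1 + 1) = (x : ℂ) ^ (1 - c - 1 - 1 + 1) * (x : ℂ) := by
    rw [Complex.cpow_add _ _ hx0', Complex.cpow_one]
  have hpa : (x : ℂ) ^ (1 - c - 1) = (x : ℂ) ^ (1 - c - 1 - 1) * (x : ℂ) := by
    calc (x : ℂ) ^ (1 - c - 1) = (x : ℂ) ^ (1 - c - 1 - 1 + 1) :=
          congrArg (fun s : ℂ => (x : ℂ) ^ s) (by ring)
      _ = (x : ℂ) ^ (1 - c - 1 - 1) * (x : ℂ) := e1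
  have hpb : (x : ℂ) ^ (1 - c) = (x : ℂ) ^ (1 - c - 1 - 1) * (x : ℂ) * (x : ℂ) := by
    calc (x : ℂ) ^ (1 - c) = (x : ℂ) ^ (1 - c - 1 - 1 + 1 + 1) :=
          congrArg (fun s : ℂ => (x : ℂ) ^ s) (by ring)
      _ = (x : ℂ) ^ (1 - c - 1 - 1 + 1) * (x : ℂ) := e2
      _ = (x : ℂ) ^ (1 - c - 1 - 1) * (x : ℂ) * (x : ℂ) := by rw [e1]
  rw [hpa, hpb]
  linear_combination ((x : ℂ) ^ (1 - c - 1 - 1) * (x : ℂ) * (x : ℂ)) * hODE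
end

section
/- For x in (0,1), the function κ(x) = (1−x)^{c−a−b} ₂F₁(c−a, c−b; c−a−b+1; 1−x) satisfies the hypergeometric differential equation x(1−x)κ''(x) + (c − (a+b+1)x)κ'(x) − ab κ(x) = 0. -/
open Complex

namespace HypAux

open Complex Filter Finset Topology

/-- coefficients whose power series converges on the unit disc, robustly. -/
def Good (v : ℕ → ℂ) : Prop := ∀ r : ℝ, 0 < r → r < 1 → Summable fun n => ‖v n‖ * r ^ n

lemma Good.summable {v : ℕ → ℂ} (hv : Good v) {z : ℂ} (hz : ‖z‖ < 1) :
    Summable fun n => v n * z ^ n := by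
  have h0 : (0:ℝ) ≤ ‖z‖ := norm_nonneg z
  have hr0 : (0:ℝ) < (‖z‖ + 1) / 2 := by linarith
  have hr1 : (‖z‖ + 1) / 2 < 1 := by linarith
  refine Summable.of_norm_bounded (hv _ hr0 hr1) fun n => ?_
  rw [norm_mul, norm_pow]
  gcongr
  linarith

lemma Good.bound {v : ℕ → ℂ} (hv : Good v) {r : ℝ} (hr0 : 0 < r) (hr1 : r < 1) :
    ∃ B : ℝ, 0 ≤ B ∧ ∀ n, ‖v n‖ ≤ B / r ^ n := by
  have hs := hv r hr0 hr1
  refine ⟨∑' n, ‖v n‖ * r ^ n, tsum_nonneg fun n => by positivity, fun n => ?_⟩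
  rw [le_div_iff₀ (by positivity)]
  exact hs.le_tsum n fun j _ => by positivity

lemma Good.shift {v : ℕ → ℂ} (hv : Good v) : Good fun n : ℕ => ((n : ℂ) + 1) * v (n + 1) := by
  intro r hr0 hr1
  obtain ⟨r', hrr', hr'1⟩ : ∃ r', r < r' ∧ r' < 1 := ⟨(r+1)/2, by linarith, by linarith⟩
  have hr'0 : (0:ℝ) < r' := lt_trans hr0 hrr'
  obtain ⟨B, hB0, hB⟩ := hv.bound hr'0 hr'1
  have hq1 : r / r' < 1 := (div_lt_one hr'0).mpr hrr'
  have hq0 : (0:ℝ) ≤ r / r' := by positivity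
  have hsum : Summable fun n : ℕ => (B / r') * (((n:ℝ) + 1) * (r / r') ^ n) := by
    apply Summable.mul_left
    have h1 : Summable fun n : ℕ => (n:ℝ) * (r/r')^n := by
      simpa using summable_pow_mul_geometric_of_norm_lt_one (R := ℝ) 1
        (r := r/r') (by rwa [Real.norm_of_nonneg hq0])
    have h2 : Summable fun n : ℕ => (r/r')^n := summable_geometric_of_lt_one hq0 hq1
    simpa [add_mul, one_mul] using h1.add h2
  refine Summable.of_nonneg_of_le (fun n => by positivity) (fun n => ?_) hsum
  have hnorm : ‖((n:ℂ) + 1)‖ = (n : ℝ) + 1 := by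
    rw [show ((n:ℂ)+1) = ((n+1 : ℕ) : ℂ) by push_cast; ring, Complex.norm_natCast]
    push_cast; ring
  rw [norm_mul, hnorm]
  have hr'ne : r' ≠ 0 := ne_of_gt hr'0
  calc ((n:ℝ)+1) * ‖v (n+1)‖ * r ^ n ≤ ((n:ℝ)+1) * (B / r' ^ (n+1)) * r ^ n := by
        gcongr
        exact hB (n+1)
    _ = (B / r') * (((n:ℝ)+1) * (r/r')^n) := by
        rw [div_pow]
        field_simp
        ring

lemma Good.hasDerivAt {v : ℕ → ℂ} (hv : Good v) {z : ℂ} (hz : ‖z‖ < 1) :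
    HasDerivAt (fun w => ∑' n : ℕ, v n * w ^ n)
      (∑' n : ℕ, ((n : ℂ) + 1) * v (n + 1) * z ^ n) z := by
  have h0 : (0:ℝ) ≤ ‖z‖ := norm_nonneg z
  obtain ⟨r, hzr, hr1⟩ : ∃ r, ‖z‖ < r ∧ r < 1 := ⟨(‖z‖+1)/2, by linarith, by linarith⟩
  have hr0 : (0:ℝ) < r := lt_of_le_of_lt h0 hzr
  obtain ⟨r', hrr', hr'1⟩ : ∃ r', r < r' ∧ r' < 1 := ⟨(r+1)/2, by linarith, by linarith⟩
  have hr'0 : (0:ℝ) < r' := lt_trans hr0 hrr'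
  obtain ⟨B, hB0, hB⟩ := hv.bound hr'0 hr'1
  have hq1 : r / r' < 1 := (div_lt_one hr'0).mpr hrr'
  have hq0 : (0:ℝ) ≤ r / r' := by positivity
  have hrne : r ≠ 0 := ne_of_gt hr0
  have hr'ne : r' ≠ 0 := ne_of_gt hr'0
  set M : ℕ → ℝ := fun n : ℕ => (B / r) * ((n:ℝ) * (r/r')^n) with hMdef
  have hMsum : Summable M := by
    apply Summable.mul_left
    simpa using summable_pow_mul_geometric_of_norm_lt_one (R := ℝ) 1
      (r := r/r') (by rwa [Real.norm_of_nonneg hq0])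
  have hbound : ∀ (n : ℕ), ∀ y ∈ Metric.ball (0:ℂ) r,
      ‖v n * ((n:ℂ) * y ^ (n-1))‖ ≤ M n := by
    intro n y hy
    have hyr : ‖y‖ ≤ r := le_of_lt (mem_ball_zero_iff.mp hy)
    match n with
    | 0 => simp [hMdef]
    | (m+1) =>
      have hrw : ‖v (m+1) * (((m+1 : ℕ):ℂ) * y ^ (m+1-1))‖
          = ‖v (m+1)‖ * (((m:ℝ)+1) * ‖y‖ ^ m) := by
        rw [norm_mul, norm_mul, norm_pow, Complex.norm_natCast]
        push_cast; ring
      rw [hrw]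
      calc ‖v (m+1)‖ * (((m:ℝ)+1) * ‖y‖^m)
          ≤ (B / r'^(m+1)) * (((m:ℝ)+1) * r^m) := by
            gcongr
            exact hB _
        _ = M (m+1) := by
            simp only [hMdef, div_pow]
            push_cast
            field_simp
            ring
  have key := hasDerivAt_tsum_of_isPreconnected hMsum Metric.isOpen_ball
      ((convex_ball (0:ℂ) r).isPreconnected)
      (fun n y _ => (hasDerivAt_pow n y).const_mul (v n))
      hbound
      (Metric.mem_ball_self hr0)
      (hv.summable (by simp : ‖(0:ℂ)‖ < 1))
      (mem_ball_zero_iff.mpr hzr)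
  have hsum2 : Summable fun n : ℕ => v n * ((n:ℂ) * z ^ (n-1)) :=
    Summable.of_norm_bounded hMsum fun n => hbound n z (mem_ball_zero_iff.mpr hzr)
  have hshift : HasSum (fun n : ℕ => v (n+1) * (((n+1:ℕ):ℂ) * z ^ (n+1-1)))
      (∑' n : ℕ, v n * ((n:ℂ) * z ^ (n-1))) := by
    refine (hasSum_nat_add_iff (f := fun n : ℕ => v n * ((n:ℂ) * z ^ (n-1))) 1).mpr ?_
    simpa using hsum2.hasSum
  have hfun : (fun n : ℕ => v (n+1) * (((n+1:ℕ):ℂ) * z ^ (n+1-1)))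
      = fun n : ℕ => ((n:ℂ)+1) * v (n+1) * z ^ n := by
    funext n
    push_cast [Nat.succ_sub_one]
    ring
  rw [hfun] at hshift
  rw [hshift.tsum_eq]
  exact key


noncomputable def w0 (a b c : ℂ) (n : ℕ) : ℂ :=
  (ascPochhammer ℂ n).eval (c - a) * (ascPochhammer ℂ n).eval (c - b) /
    ((ascPochhammer ℂ n).eval (c - a - b + 1) * (n.factorial : ℂ))

noncomputable def w1 (a b c : ℂ) (n : ℕ) : ℂ := ((n:ℂ) + 1) * w0 a b c (n + 1)

noncomputable def w2 (a b c : ℂ) (n : ℕ) : ℂ := ((n:ℂ) + 1) * w1 a b c (n + 1)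

noncomputable def T0 (a b c z : ℂ) : ℂ := ∑' n : ℕ, w0 a b c n * z ^ n
noncomputable def T1 (a b c z : ℂ) : ℂ := ∑' n : ℕ, w1 a b c n * z ^ n
noncomputable def T2 (a b c z : ℂ) : ℂ := ∑' n : ℕ, w2 a b c n * z ^ n

variable {a b c : ℂ}

lemma den_ne (hcab : ∀ k : ℤ, c - a - b ≠ (k : ℂ)) (n : ℕ) :
    (c - a - b + 1 : ℂ) + n ≠ 0 := by
  intro h
  apply hcab (-(n+1 : ℤ))
  push_cast
  linear_combination h

lemma poch_ne (hcab : ∀ k : ℤ, c - a - b ≠ (k : ℂ)) (n : ℕ) :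
    (ascPochhammer ℂ n).eval (c - a - b + 1) ≠ 0 := by
  induction n with
  | zero => simp
  | succ m ih =>
    rw [ascPochhammer_succ_eval]
    exact mul_ne_zero ih (den_ne hcab m)

lemma w0_rec (hcab : ∀ k : ℤ, c - a - b ≠ (k : ℂ)) (n : ℕ) :
    w0 a b c (n+1) * (((n:ℂ) + 1) * ((c - a - b + 1) + n)) =
      w0 a b c n * ((c - a + n) * (c - b + n)) := by
  have h1 := poch_ne hcab n
  have h4 := den_ne hcab n
  have h2 : ((n.factorial : ℂ)) ≠ 0 := Nat.cast_ne_zero.mpr n.factorial_ne_zero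
  have h3 : ((n:ℂ) + 1) ≠ 0 := by
    have : ((n+1 : ℕ) : ℂ) ≠ 0 := Nat.cast_ne_zero.mpr (Nat.succ_ne_zero n)
    push_cast at this; exact this
  simp only [w0, ascPochhammer_succ_eval, Nat.factorial_succ]
  push_cast
  field_simp

lemma tendsto_ratio (x y : ℂ) :
    Tendsto (fun n : ℕ => (x + n) / (y + n)) atTop (𝓝 1) := by
  have hb : Tendsto (fun n : ℕ => ((n:ℝ) - ‖y‖)⁻¹) atTop (𝓝 0) :=
    tendsto_inv_atTop_zero.comp
      (tendsto_atTop_add_const_right _ (-‖y‖) tendsto_natCast_atTop_atTop)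
  have hinv : Tendsto (fun n : ℕ => ((y + n : ℂ))⁻¹) atTop (𝓝 0) := by
    apply squeeze_zero_norm' ?_ hb
    filter_upwards [eventually_gt_atTop ⌈‖y‖⌉₊] with n hn
    have h1 : ‖y‖ < (n:ℝ) := lt_of_le_of_lt (Nat.le_ceil _) (by exact_mod_cast hn)
    have h2 : (0:ℝ) < (n:ℝ) - ‖y‖ := by linarith
    have h3 : (n:ℝ) - ‖y‖ ≤ ‖y + (n:ℂ)‖ := by
      have h4 : ‖(n:ℂ)‖ ≤ ‖y + (n:ℂ)‖ + ‖y‖ := by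
        calc ‖(n:ℂ)‖ = ‖y + (n:ℂ) - y‖ := by rw [add_sub_cancel_left]
          _ ≤ ‖y + (n:ℂ)‖ + ‖y‖ := norm_sub_le _ _
      rw [Complex.norm_natCast] at h4
      linarith
    rw [norm_inv]
    exact inv_anti₀ h2 h3
  have h2 : Tendsto (fun n : ℕ => 1 + (x - y) * (y + n)⁻¹) atTop (𝓝 1) := by
    have h := hinv.const_mul (x - y)
    simpa using (tendsto_const_nhds (x := (1:ℂ)) (f := atTop)).add h
  apply h2.congr'
  filter_upwards [eventually_gt_atTop ⌈‖y‖⌉₊] with n hn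
  have h1 : ‖y‖ < (n:ℝ) := lt_of_le_of_lt (Nat.le_ceil _) (by exact_mod_cast hn)
  have hne : (y + n : ℂ) ≠ 0 := by
    intro h
    have : ((n:ℂ)) = -y := by linear_combination h
    have h5 : ‖((n:ℂ))‖ = ‖y‖ := by rw [this, norm_neg]
    rw [Complex.norm_natCast] at h5
    linarith
  field_simp
  ring


-- The good lemma
lemma good_w0 (hcab : ∀ k : ℤ, c - a - b ≠ (k : ℂ)) : Good (w0 a b c) := by
  intro r hr0 hr1
  have hl0 : (0:ℝ) < (1 + r)/2 := by linarith
  have hl1 : (1 + r)/2 < 1 := by linarith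
  have hrl : r < (1 + r)/2 := by linarith
  set l : ℝ := (1 + r)/2 with hldef
  have hlr : 1 < l / r := (one_lt_div hr0).mpr hrl
  have T1 := tendsto_ratio (c - a) 1
  have T2 := tendsto_ratio (c - b) (c - a - b + 1)
  have T : Tendsto (fun n : ℕ =>
      ‖((c - a + n) * (c - b + n)) / ((((n:ℂ)) + 1) * ((c - a - b + 1) + n))‖)
      atTop (𝓝 1) := by
    have h := (T1.mul T2).norm
    simp only [one_mul, norm_one] at h
    apply h.congr
    intro n
    congr 1
    rw [div_mul_div_comm]
    ring
  have hev : ∀ᶠ n : ℕ in atTop,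
      ‖((c - a + n) * (c - b + n)) / ((((n:ℂ)) + 1) * ((c - a - b + 1) + n))‖ ≤ l / r :=
    T.eventually_le_const hlr
  apply summable_of_ratio_norm_eventually_le (r := l) hl1
  filter_upwards [hev] with n hn
  have h3 : ((n:ℂ) + 1) ≠ 0 := by
    have : ((n+1 : ℕ) : ℂ) ≠ 0 := Nat.cast_ne_zero.mpr (Nat.succ_ne_zero n)
    push_cast at this; exact this
  have hden : (((n:ℂ)) + 1) * ((c - a - b + 1) + n) ≠ 0 := mul_ne_zero h3 (den_ne hcab n)
  have hw : w0 a b c (n+1)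
      = w0 a b c n * (((c - a + n) * (c - b + n)) / ((((n:ℂ)) + 1) * ((c - a - b + 1) + n))) := by
    rw [mul_div_assoc', eq_div_iff hden]
    linear_combination w0_rec hcab n
  have hnorm : ‖w0 a b c (n+1)‖ = ‖w0 a b c n‖
      * ‖((c - a + n) * (c - b + n)) / ((((n:ℂ)) + 1) * ((c - a - b + 1) + n))‖ := by
    rw [hw, norm_mul]
  rw [Real.norm_of_nonneg (by positivity), Real.norm_of_nonneg (by positivity), hnorm, pow_succ]
  calc ‖w0 a b c n‖ * ‖((c - a + n) * (c - b + n)) / ((((n:ℂ)) + 1) * ((c - a - b + 1) + n))‖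
        * (r ^ n * r)
      ≤ ‖w0 a b c n‖ * (l / r) * (r ^ n * r) := by gcongr
    _ = l * (‖w0 a b c n‖ * r ^ n) := by field_simp


lemma ode (hcab : ∀ k : ℤ, c - a - b ≠ (k : ℂ)) {z : ℂ} (hz : ‖z‖ < 1) :
    z * (1 - z) * T2 a b c z + ((c - a - b + 1) - ((c - a) + (c - b) + 1) * z) * T1 a b c z
      - (c - a) * (c - b) * T0 a b c z = 0 := by
  have g0 : Good (w0 a b c) := good_w0 hcab
  have g1 : Good (w1 a b c) := g0.shift
  have g2 : Good (w2 a b c) := g1.shift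
  have h0 : HasSum (fun n : ℕ => w0 a b c n * z ^ n) (T0 a b c z) := (g0.summable hz).hasSum
  have h1 : HasSum (fun n : ℕ => w1 a b c n * z ^ n) (T1 a b c z) := (g1.summable hz).hasSum
  have h2 : HasSum (fun n : ℕ => w2 a b c n * z ^ n) (T2 a b c z) := (g2.summable hz).hasSum
  -- left side: z * T2 + (c-a-b+1) * T1
  have hzT2 := h2.mul_left z
  have hfun1 : (fun n : ℕ => z * (w2 a b c n * z ^ n))
      = fun n : ℕ => (((n+1:ℕ)):ℂ) * w1 a b c (n+1) * z ^ (n+1) := by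
    funext n; simp only [w2]; push_cast; ring
  rw [hfun1] at hzT2
  have hg : HasSum (fun m : ℕ => (m:ℂ) * w1 a b c m * z ^ m) (z * T2 a b c z) := by
    have h := (hasSum_nat_add_iff (f := fun m : ℕ => (m:ℂ) * w1 a b c m * z ^ m) 1).mp hzT2
    simpa using h
  have hc'T1 := h1.mul_left (c - a - b + 1)
  have hA' := hg.add hc'T1
  have hfun2 : (fun n : ℕ => (n:ℂ) * w1 a b c n * z ^ n + (c - a - b + 1) * (w1 a b c n * z ^ n))
      = fun n : ℕ => ((n:ℂ) + (c - a - b + 1)) * w1 a b c n * z ^ n := by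
    funext n; ring
  rw [hfun2] at hA'
  -- right side: z^2 * T2 + ((c-a)+(c-b)+1) z T1 + (c-a)(c-b) T0
  have hz2T2 := h2.mul_left (z^2)
  have hfun3 : (fun n : ℕ => z^2 * (w2 a b c n * z ^ n))
      = fun n : ℕ => (((n+2:ℕ)):ℂ) * ((((n+2:ℕ)):ℂ) - 1) * w0 a b c (n+2) * z ^ (n+2) := by
    funext n; simp only [w2, w1]; push_cast; ring
  rw [hfun3] at hz2T2
  have hg2 : HasSum (fun m : ℕ => (m:ℂ) * ((m:ℂ) - 1) * w0 a b c m * z ^ m)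
      (z^2 * T2 a b c z) := by
    have h := (hasSum_nat_add_iff
      (f := fun m : ℕ => (m:ℂ) * ((m:ℂ) - 1) * w0 a b c m * z ^ m) 2).mp hz2T2
    simpa [Finset.sum_range_succ] using h
  have hzT1 := h1.mul_left (((c - a) + (c - b) + 1) * z)
  have hfun4 : (fun n : ℕ => (((c - a) + (c - b) + 1) * z) * (w1 a b c n * z ^ n))
      = fun n : ℕ => ((c - a) + (c - b) + 1) * (((n+1:ℕ)):ℂ) * w0 a b c (n+1) * z ^ (n+1) := by
    funext n; simp only [w1]; push_cast; ring
  rw [hfun4] at hzT1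
  have hg1 : HasSum (fun m : ℕ => ((c - a) + (c - b) + 1) * (m:ℂ) * w0 a b c m * z ^ m)
      ((((c - a) + (c - b) + 1) * z) * T1 a b c z) := by
    have h := (hasSum_nat_add_iff
      (f := fun m : ℕ => ((c - a) + (c - b) + 1) * (m:ℂ) * w0 a b c m * z ^ m) 1).mp hzT1
    simpa using h
  have hg0 := h0.mul_left ((c - a) * (c - b))
  have hB' := (hg2.add hg1).add hg0
  have hfun5 : (fun n : ℕ => ((n:ℂ) * ((n:ℂ) - 1) * w0 a b c n * z ^ n
        + ((c - a) + (c - b) + 1) * (n:ℂ) * w0 a b c n * z ^ n)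
        + ((c - a) * (c - b)) * (w0 a b c n * z ^ n))
      = fun n : ℕ => ((n:ℂ) + (c - a)) * ((n:ℂ) + (c - b)) * w0 a b c n * z ^ n := by
    funext n; ring
  rw [hfun5] at hB'
  -- identify the two functions via the recurrence
  have heq : (fun n : ℕ => ((n:ℂ) + (c - a - b + 1)) * w1 a b c n * z ^ n)
      = fun n : ℕ => ((n:ℂ) + (c - a)) * ((n:ℂ) + (c - b)) * w0 a b c n * z ^ n := by
    funext n
    simp only [w1]
    linear_combination z^n * w0_rec hcab n
  rw [heq] at hA'
  have hkey := hA'.unique hB'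
  linear_combination hkey


end HypAux

open HypAux Filter Topology

/--  solves the hypergeometric ODE on . -/
theorem second_solution_at_one_solves_ODE (a b c : ℂ) (hcab : ∀ k : ℤ, c - a - b ≠ (k : ℂ))
    (x : ℝ) (hx : x ∈ Set.Ioo (0 : ℝ) 1) :
    (x : ℂ) * (1 - (x : ℂ)) *
        deriv (deriv (fun t : ℝ =>
          ((1 : ℂ) - t) ^ (c - a - b) * hyp (c - a) (c - b) (c - a - b + 1) (1 - t))) x
      + (c - (a + b + 1) * (x : ℂ)) *
        deriv (fun t : ℝ =>
          ((1 : ℂ) - t) ^ (c - a - b) * hyp (c - a) (c - b) (c - a - b + 1) (1 - t)) x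
      - a * b * (((1 : ℂ) - x) ^ (c - a - b) * hyp (c - a) (c - b) (c - a - b + 1) (1 - x)) = 0 := by
  obtain ⟨hx0, hx1⟩ := hx
  have g0 : Good (w0 a b c) := good_w0 hcab
  have g1 : Good (w1 a b c) := g0.shift
  -- basic facts for points 1 - t, t ∈ (0,1)
  have hnorm : ∀ t : ℝ, 0 < t → t < 1 → ‖(1:ℂ) - (t:ℂ)‖ < 1 := by
    intro t ht0 ht1
    rw [show ((1:ℂ) - (t:ℂ)) = (((1 - t : ℝ)) : ℂ) by push_cast; ring, Complex.norm_real,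
      Real.norm_of_nonneg (by linarith)]
    linarith
  have hslit : ∀ t : ℝ, 0 < t → t < 1 → ((1:ℂ) - (t:ℂ)) ∈ slitPlane := by
    intro t ht0 ht1
    rw [mem_slitPlane_iff]
    left
    simp only [Complex.sub_re, Complex.one_re, Complex.ofReal_re]
    linarith
  -- first derivative, everywhere on (0,1)
  have key : ∀ t : ℝ, t ∈ Set.Ioo (0:ℝ) 1 →
      HasDerivAt (fun t : ℝ =>
          ((1 : ℂ) - t) ^ (c - a - b) * hyp (c - a) (c - b) (c - a - b + 1) (1 - t))
        (((c - a - b) * ((1:ℂ) - (t:ℂ)) ^ (c - a - b - 1) * T0 a b c ((1:ℂ) - (t:ℂ))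
          + ((1:ℂ) - (t:ℂ)) ^ (c - a - b) * T1 a b c ((1:ℂ) - (t:ℂ))) * (-1)) t := by
    intro t ht
    have hzt : ‖(1:ℂ) - (t:ℂ)‖ < 1 := hnorm t ht.1 ht.2
    have hst : ((1:ℂ) - (t:ℂ)) ∈ slitPlane := hslit t ht.1 ht.2
    have hS0d : HasDerivAt (T0 a b c) (T1 a b c ((1:ℂ) - (t:ℂ))) ((1:ℂ) - (t:ℂ)) :=
      g0.hasDerivAt hzt
    have hpow : HasDerivAt (fun y : ℂ => y ^ (c - a - b))
        ((c - a - b) * ((1:ℂ) - (t:ℂ)) ^ (c - a - b - 1)) ((1:ℂ) - (t:ℂ)) :=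
      (Complex.hasStrictDerivAt_cpow_const hst).hasDerivAt
    have hmul := hpow.mul hS0d
    have hmap : HasDerivAt (fun s : ℝ => (1:ℂ) - (s:ℂ)) (-1) t := by
      simpa using ((Complex.ofRealCLM.hasDerivAt (x := t)).const_sub (1:ℂ))
    have hcomp := hmul.comp t hmap
    exact hcomp
  have hev : deriv (fun t : ℝ =>
          ((1 : ℂ) - t) ^ (c - a - b) * hyp (c - a) (c - b) (c - a - b + 1) (1 - t))
      =ᶠ[𝓝 x] fun t : ℝ =>
        (((c - a - b) * ((1:ℂ) - (t:ℂ)) ^ (c - a - b - 1) * T0 a b c ((1:ℂ) - (t:ℂ))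
          + ((1:ℂ) - (t:ℂ)) ^ (c - a - b) * T1 a b c ((1:ℂ) - (t:ℂ))) * (-1)) := by
    filter_upwards [isOpen_Ioo.mem_nhds (⟨hx0, hx1⟩ : x ∈ Set.Ioo (0:ℝ) 1)] with t ht
    exact (key t ht).deriv
  -- second derivative at x
  have hzx : ‖(1:ℂ) - (x:ℂ)‖ < 1 := hnorm x hx0 hx1
  have hsx : ((1:ℂ) - (x:ℂ)) ∈ slitPlane := hslit x hx0 hx1
  have hS0d : HasDerivAt (T0 a b c) (T1 a b c ((1:ℂ) - (x:ℂ))) ((1:ℂ) - (x:ℂ)) :=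
    g0.hasDerivAt hzx
  have hS1d : HasDerivAt (T1 a b c) (T2 a b c ((1:ℂ) - (x:ℂ))) ((1:ℂ) - (x:ℂ)) :=
    g1.hasDerivAt hzx
  have hpow1 : HasDerivAt (fun y : ℂ => y ^ (c - a - b - 1))
      ((c - a - b - 1) * ((1:ℂ) - (x:ℂ)) ^ (c - a - b - 1 - 1)) ((1:ℂ) - (x:ℂ)) :=
    (Complex.hasStrictDerivAt_cpow_const hsx).hasDerivAt
  have hpow : HasDerivAt (fun y : ℂ => y ^ (c - a - b))
      ((c - a - b) * ((1:ℂ) - (x:ℂ)) ^ (c - a - b - 1)) ((1:ℂ) - (x:ℂ)) :=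
    (Complex.hasStrictDerivAt_cpow_const hsx).hasDerivAt
  have hmap : HasDerivAt (fun s : ℝ => (1:ℂ) - (s:ℂ)) (-1) x := by
    simpa using ((Complex.ofRealCLM.hasDerivAt (x := x)).const_sub (1:ℂ))
  have hA := (hpow1.const_mul (c - a - b)).mul hS0d
  have hB := hpow.mul hS1d
  have hGc := ((hA.add hB).mul_const (-1 : ℂ))
  have hcomp2 := hGc.comp x hmap
  have hder2 : HasDerivAt (fun t : ℝ =>
        (((c - a - b) * ((1:ℂ) - (t:ℂ)) ^ (c - a - b - 1) * T0 a b c ((1:ℂ) - (t:ℂ))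
          + ((1:ℂ) - (t:ℂ)) ^ (c - a - b) * T1 a b c ((1:ℂ) - (t:ℂ))) * (-1)))
      (((((c - a - b) * ((c - a - b - 1) * ((1:ℂ) - (x:ℂ)) ^ (c - a - b - 1 - 1)))
            * T0 a b c ((1:ℂ) - (x:ℂ))
          + ((c - a - b) * ((1:ℂ) - (x:ℂ)) ^ (c - a - b - 1)) * T1 a b c ((1:ℂ) - (x:ℂ))
          + (((c - a - b) * ((1:ℂ) - (x:ℂ)) ^ (c - a - b - 1)) * T1 a b c ((1:ℂ) - (x:ℂ))
            + ((1:ℂ) - (x:ℂ)) ^ (c - a - b) * T2 a b c ((1:ℂ) - (x:ℂ)))) * (-1)) * (-1)) x :=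
    hcomp2
  -- put everything together
  have e1 : deriv (fun t : ℝ =>
          ((1 : ℂ) - t) ^ (c - a - b) * hyp (c - a) (c - b) (c - a - b + 1) (1 - t)) x
      = ((c - a - b) * ((1:ℂ) - (x:ℂ)) ^ (c - a - b - 1) * T0 a b c ((1:ℂ) - (x:ℂ))
          + ((1:ℂ) - (x:ℂ)) ^ (c - a - b) * T1 a b c ((1:ℂ) - (x:ℂ))) * (-1) :=
    (key x ⟨hx0, hx1⟩).deriv
  have e2 : deriv (deriv (fun t : ℝ =>
          ((1 : ℂ) - t) ^ (c - a - b) * hyp (c - a) (c - b) (c - a - b + 1) (1 - t))) x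
      = ((((c - a - b) * ((c - a - b - 1) * ((1:ℂ) - (x:ℂ)) ^ (c - a - b - 1 - 1)))
            * T0 a b c ((1:ℂ) - (x:ℂ))
          + ((c - a - b) * ((1:ℂ) - (x:ℂ)) ^ (c - a - b - 1)) * T1 a b c ((1:ℂ) - (x:ℂ))
          + (((c - a - b) * ((1:ℂ) - (x:ℂ)) ^ (c - a - b - 1)) * T1 a b c ((1:ℂ) - (x:ℂ))
            + ((1:ℂ) - (x:ℂ)) ^ (c - a - b) * T2 a b c ((1:ℂ) - (x:ℂ)))) * (-1)) * (-1) := by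
    rw [hev.deriv_eq]
    exact hder2.deriv
  have hT : hyp (c - a) (c - b) (c - a - b + 1) (1 - (x:ℂ)) = T0 a b c ((1:ℂ) - (x:ℂ)) := rfl
  rw [e1, e2, hT]
  -- cpow manipulations
  have hzne : ((1:ℂ) - (x:ℂ)) ≠ 0 := by
    intro h
    have hre : ((1:ℂ) - (x:ℂ)).re = 1 - x := by
      simp [Complex.sub_re, Complex.one_re, Complex.ofReal_re]
    rw [h] at hre
    simp only [Complex.zero_re] at hre
    linarith
  have ep1 : ((1:ℂ) - (x:ℂ)) ^ (c - a - b - 1)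
      = ((1:ℂ) - (x:ℂ)) ^ (c - a - b - 1 - 1) * ((1:ℂ) - (x:ℂ)) := by
    conv_lhs => rw [show c - a - b - 1 = (c - a - b - 1 - 1) + 1 by ring]
    rw [Complex.cpow_add _ _ hzne, Complex.cpow_one]
  have ep2 : ((1:ℂ) - (x:ℂ)) ^ (c - a - b)
      = ((1:ℂ) - (x:ℂ)) ^ (c - a - b - 1 - 1) * ((1:ℂ) - (x:ℂ)) * ((1:ℂ) - (x:ℂ)) := by
    conv_lhs => rw [show c - a - b = (c - a - b - 1 - 1) + 1 + 1 by ring]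
    rw [Complex.cpow_add _ _ hzne, Complex.cpow_add _ _ hzne, Complex.cpow_one]
  rw [ep2, ep1]
  have hode := ode hcab (a := a) (b := b) (c := c) hzx
  linear_combination (((1:ℂ) - (x:ℂ)) ^ (c - a - b - 1 - 1) * ((1:ℂ) - (x:ℂ)) * ((1:ℂ) - (x:ℂ)))
    * hode
end
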